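/- Let L > 0 and R = Σ_{j=1}^N r_j, and assume R < 1. Then for every complex number s with Re s > D, the series Σ_{l=0}^∞ Σ_{(a_1,...,a_l) ∈ {1,...,N}^l} (L(1−R)·r_{a_1} r_{a_2} ··· r_{a_l})^s over all finite words (including the empty word, which contributes (L(1−R))^s) converges absolutely and equals (L(1−R))^s / (1 − Σ_{j=1}^N r_j^s). In other words, the geometric zeta function of the self-similar fractal string with scaling ratios r_1, ..., r_N and total length L equals (L(1−R))^s · ζ_w(s) for Re s > D, where ζ_w(s) = 1/(1 − Σ_{j=1}^N r_j^s) is the dynamical zeta function of the corresponding self-similar flow. -/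

import Mathlib

/-- The geometric zeta function of a self-similar string: for `Re s > D`, the series
`∑ (L(1-R) r_{a_1} ⋯ r_{a_l})^s` over all finite words (including the empty word)
converges absolutely and equals `(L(1-R))^s / (1 - ∑_j r_j^s)`, i.e. it equals
`(L(1-R))^s ζ_w(s)`. Here `t^s = e^{s log t}` for `t > 0`, and `r_j = e^{-w_j}`. -/
theorem geometric_zeta_self_similar_string (N : ℕ) (hN : 2 ≤ N) (w : Fin N → ℝ)
    (hw : ∀ j, 0 < w j) (hmono : Monotone w)
    (D : ℝ) (hD : ∑ j, Real.exp (-(w j) * D) = 1)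
    (L : ℝ) (hL : 0 < L) (R : ℝ) (hR : R = ∑ j, Real.exp (-(w j))) (hR1 : R < 1)
    (s : ℂ) (hs : D < s.re) :
    Summable (fun y : Σ l : ℕ, Fin l → Fin N =>
        ‖Complex.exp (s * (Real.log (L * (1 - R) * ∏ i, Real.exp (-(w (y.2 i)))) : ℂ))‖) ∧
      ∑' y : Σ l : ℕ, Fin l → Fin N,
          Complex.exp (s * (Real.log (L * (1 - R) * ∏ i, Real.exp (-(w (y.2 i)))) : ℂ))
        = Complex.exp (s * (Real.log (L * (1 - R)) : ℂ))
            / (1 - ∑ j, Complex.exp (-(w j : ℂ) * s)) := by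
  have hc : (0:ℝ) < L * (1 - R) := mul_pos hL (by linarith)
  set c := L * (1 - R) with hcdef
  set z : ℂ := ∑ j, Complex.exp (-(w j : ℂ) * s) with hz
  set x : ℝ := ∑ j, Real.exp (-(w j) * s.re) with hx
  have hx0 : 0 ≤ x := Finset.sum_nonneg fun j _ => (Real.exp_pos _).le
  have hx1 : x < 1 := by
    rw [hx, ← hD]
    refine Finset.sum_lt_sum_of_nonempty ?_ ?_
    · have : Nonempty (Fin N) := ⟨⟨0, by omega⟩⟩
      exact Finset.univ_nonempty
    · intro j _
      apply Real.exp_lt_exp.2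
      have := hw j
      nlinarith
  have hzx : ‖z‖ ≤ x := by
    refine (norm_sum_le _ _).trans_eq ?_
    apply Finset.sum_congr rfl
    intro j _
    rw [Complex.norm_exp]
    congr 1
    simp [Complex.mul_re]
  have hz1 : ‖z‖ < 1 := lt_of_le_of_lt hzx hx1
  -- rewrite each term
  have hterm : ∀ (l : ℕ) (a : Fin l → Fin N),
      Complex.exp (s * (Real.log (c * ∏ i, Real.exp (-(w (a i)))) : ℂ))
        = Complex.exp (s * (Real.log c : ℂ)) * ∏ i, Complex.exp (-(w (a i) : ℂ) * s) := by
    intro l a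
    have hlog : Real.log (c * ∏ i, Real.exp (-(w (a i))))
        = Real.log c + ∑ i, (-(w (a i))) := by
      rw [Real.log_mul hc.ne' (by positivity), Real.log_prod]
      · simp [Real.log_exp]
      · intro i _; exact (Real.exp_pos _).ne'
    rw [hlog]
    push_cast
    rw [mul_add, Complex.exp_add, Finset.mul_sum, Complex.exp_sum]
    congr 1
    exact Finset.prod_congr rfl fun i _ => by ring_nf
  have hfiberC : ∀ l : ℕ,
      ∑ a : Fin l → Fin N, ∏ i, Complex.exp (-(w (a i) : ℂ) * s) = z ^ l := by
    intro l
    rw [hz, Finset.sum_pow' Finset.univ (fun j => Complex.exp (-(w j : ℂ) * s)) l,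
      Fintype.piFinset_univ]
  have hfiberR : ∀ l : ℕ,
      ∑ a : Fin l → Fin N, ∏ i, Real.exp (-(w (a i)) * s.re) = x ^ l := by
    intro l
    rw [hx, Finset.sum_pow' Finset.univ (fun j => Real.exp (-(w j) * s.re)) l,
      Fintype.piFinset_univ]
  have hnormterm : ∀ (l : ℕ) (a : Fin l → Fin N),
      ‖Complex.exp (s * (Real.log (c * ∏ i, Real.exp (-(w (a i)))) : ℂ))‖
        = Real.exp ((s * (Real.log c : ℂ)).re) * ∏ i, Real.exp (-(w (a i)) * s.re) := by
    intro l a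
    rw [hterm l a, norm_mul, Complex.norm_exp, norm_prod]
    congr 1
    apply Finset.prod_congr rfl
    intro i _
    rw [Complex.norm_exp]
    congr 1
    simp [Complex.mul_re]
  have hsum : Summable (fun y : Σ l : ℕ, Fin l → Fin N =>
      ‖Complex.exp (s * (Real.log (c * ∏ i, Real.exp (-(w (y.2 i)))) : ℂ))‖) := by
    apply (summable_sigma_of_nonneg (fun y => norm_nonneg _)).2
    constructor
    · intro l; exact Summable.of_finite
    · apply Summable.congr
        ((summable_geometric_of_lt_one hx0 hx1).mul_left (Real.exp ((s * (Real.log c : ℂ)).re)))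
      intro l
      rw [tsum_fintype]
      rw [Finset.sum_congr rfl fun a _ => hnormterm l a, ← Finset.mul_sum, hfiberR l]
  refine ⟨hsum, ?_⟩
  have hsum' : Summable (fun y : Σ l : ℕ, Fin l → Fin N =>
      Complex.exp (s * (Real.log (c * ∏ i, Real.exp (-(w (y.2 i)))) : ℂ))) :=
    Summable.of_norm hsum
  rw [hsum'.tsum_sigma]
  have : ∀ l : ℕ, (∑' a : Fin l → Fin N,
      Complex.exp (s * (Real.log (c * ∏ i, Real.exp (-(w (a i)))) : ℂ)))
        = Complex.exp (s * (Real.log c : ℂ)) * z ^ l := by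
    intro l
    rw [tsum_fintype, Finset.sum_congr rfl fun a _ => hterm l a, ← Finset.mul_sum, hfiberC l]
  rw [tsum_congr this, tsum_mul_left, tsum_geometric_of_norm_lt_one hz1, div_eq_mul_inv]
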